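/- arXiv:1110.4847 — 5 statements merged into one kernel-verified Lean document; each statement's English description precedes it below -/
import Mathlib

section
/- For every integer n ≥ 1, the n-th elementary symmetric function satisfies e_n = ∑_{m ⊢ n} ∏_{l≥1} (1/m_l!) · ((-1)^{l-1}/l)^{m_l} · ∏_{l≥1} p_l^{m_l}, where the sum ranges over all multiplicity vectors m with ∑_{l≥1} l·m_l = n. -/
open MvPolynomial Finset

section Aux
open Multiset


noncomputable section ElemPS

/-- coefficient -/
def epsC (l m : ℕ) : ℚ := (1 / m.factorial : ℚ) * ((-1) ^ (l - 1) / (l : ℚ)) ^ m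

/-- extended term -/
def epsE (N n : ℕ) (s : Multiset ℕ) : MvPolynomial (Fin N) ℚ :=
  ∏ l ∈ Finset.Icc 1 n, C (epsC l (s.count l)) * (psum (Fin N) ℚ l) ^ (s.count l)

lemma epsC_zero (l : ℕ) : epsC l 0 = 1 := by simp [epsC]

lemma epsE_ext (N k n : ℕ) (hkn : k ≤ n) (s : Multiset ℕ) (hs : ∀ l ∈ s, l ≤ k) :
    epsE N k s = epsE N n s := by
  unfold epsE
  refine Finset.prod_subset (Finset.Icc_subset_Icc_right hkn) ?_
  intro l hl hl'
  have hcount : s.count l = 0 := by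
    rw [Multiset.count_eq_zero]
    intro hls
    have := hs l hls
    simp only [Finset.mem_Icc] at hl hl'
    omega
  simp [hcount, epsC_zero]

lemma epsC_ratio (i m : ℕ) (hi : 1 ≤ i) :
    ((-1 : ℚ)) ^ (i - 1) * epsC i m = ((m + 1 : ℕ) : ℚ) * (i : ℚ) * epsC i (m + 1) := by
  have hi0 : (i : ℚ) ≠ 0 := Nat.cast_ne_zero.mpr (by omega)
  have hm0 : ((m.factorial : ℚ)) ≠ 0 := Nat.cast_ne_zero.mpr m.factorial_ne_zero
  unfold epsC
  rw [Nat.factorial_succ, pow_succ]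
  push_cast
  field_simp

/-- the weight step -/
lemma epsE_step (N n i : ℕ) (hi : i ∈ Finset.Icc 1 n) (s : Multiset ℕ) (his : i ∈ s) :
    C ((-1 : ℚ) ^ (i - 1)) * psum (Fin N) ℚ i * epsE N n (s.erase i) =
      C ((s.count i : ℚ) * i) * epsE N n s := by
  have h1 : 1 ≤ i := (Finset.mem_Icc.mp hi).1
  obtain ⟨m, hm⟩ : ∃ m, s.count i = m + 1 := by
    have := Multiset.count_pos.mpr his
    exact ⟨s.count i - 1, by omega⟩
  unfold epsE
  rw [← Finset.mul_prod_erase _ _ hi, ← Finset.mul_prod_erase _ (fun l => C (epsC l (s.count l)) * (psum (Fin N) ℚ l) ^ (s.count l)) hi]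
  have htail : ∀ l ∈ (Finset.Icc 1 n).erase i,
      C (epsC l ((s.erase i).count l)) * (psum (Fin N) ℚ l) ^ ((s.erase i).count l) =
      C (epsC l (s.count l)) * (psum (Fin N) ℚ l) ^ (s.count l) := by
    intro l hl
    rw [Multiset.count_erase_of_ne (Finset.ne_of_mem_erase hl)]
  rw [Finset.prod_congr rfl htail]
  have hce : (s.erase i).count i = m := by
    rw [Multiset.count_erase_self, hm]; omega
  rw [hce, hm]
  have hp : psum (Fin N) ℚ i * (psum (Fin N) ℚ i) ^ m = (psum (Fin N) ℚ i) ^ (m + 1) := by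
    rw [pow_succ]; ring
  have hc := epsC_ratio i m h1
  calc C ((-1 : ℚ) ^ (i - 1)) * psum (Fin N) ℚ i *
        (C (epsC i m) * (psum (Fin N) ℚ i) ^ m *
          ∏ l ∈ (Finset.Icc 1 n).erase i, C (epsC l (s.count l)) * (psum (Fin N) ℚ l) ^ (s.count l))
      = (C ((-1 : ℚ) ^ (i - 1) * epsC i m) * (psum (Fin N) ℚ i) ^ (m + 1)) *
          ∏ l ∈ (Finset.Icc 1 n).erase i, C (epsC l (s.count l)) * (psum (Fin N) ℚ l) ^ (s.count l) := by
        rw [map_mul, ← hp]; ring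
    _ = C (((m + 1 : ℕ) : ℚ) * i) *
        (C (epsC i (m + 1)) * (psum (Fin N) ℚ i) ^ (m + 1) *
          ∏ l ∈ (Finset.Icc 1 n).erase i, C (epsC l (s.count l)) * (psum (Fin N) ℚ l) ^ (s.count l)) := by
        rw [hc, map_mul, map_mul]; push_cast; ring

end ElemPS

section Main
open Nat

lemma newton' (N n : ℕ) (hn : 1 ≤ n) :
    (n : MvPolynomial (Fin N) ℚ) * esymm (Fin N) ℚ n =
      ∑ i ∈ Finset.Icc 1 n,
        C ((-1 : ℚ) ^ (i - 1)) * psum (Fin N) ℚ i * esymm (Fin N) ℚ (n - i) := by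
  rw [MvPolynomial.mul_esymm_eq_sum, Finset.mul_sum]
  refine Finset.sum_bij' (fun a _ => a.2) (fun i _ => (n - i, i)) ?_ ?_ ?_ ?_ ?_
  · intro a ha
    simp only [Finset.mem_filter, Finset.HasAntidiagonal.mem_antidiagonal] at ha
    simp only [Finset.mem_Icc]
    omega
  · intro i hi
    simp only [Finset.mem_Icc] at hi
    simp only [Finset.mem_filter, Finset.HasAntidiagonal.mem_antidiagonal]
    omega
  · intro a ha
    simp only [Finset.mem_filter, Finset.HasAntidiagonal.mem_antidiagonal] at ha
    ext <;> simp <;> omega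
  · intro i hi
    rfl
  · intro a ha
    simp only [Finset.mem_filter, Finset.HasAntidiagonal.mem_antidiagonal] at ha
    have h1 : a.1 = n - a.2 := by omega
    have h2 : (n + 1) + a.1 = (a.2 - 1) + 2 * (a.1 + 1) := by omega
    have hs : (-1 : MvPolynomial (Fin N) ℚ) ^ (n + 1) * (-1) ^ a.1 = (-1) ^ (a.2 - 1) := by
      rw [← pow_add, h2, pow_add, pow_mul, neg_one_sq, one_pow, mul_one]
    have hC : (C ((-1 : ℚ) ^ (a.2 - 1)) : MvPolynomial (Fin N) ℚ) = (-1) ^ (a.2 - 1) := by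
      simp
    rw [hC, ← hs, h1]
    ring

lemma key (N : ℕ) : ∀ n : ℕ, esymm (Fin N) ℚ n = ∑ μ : Nat.Partition n, epsE N n μ.parts := by
  intro n
  induction n using Nat.strong_induction_on with
  | _ n ih =>
    rcases Nat.eq_zero_or_pos n with hn | hn
    · subst hn
      rw [esymm_zero, Fintype.sum_unique]
      simp [epsE]
    · -- n ≥ 1
      have hC : (C ((n : ℚ)) : MvPolynomial (Fin N) ℚ) ≠ 0 := by
        simp only [ne_eq, MvPolynomial.C_eq_zero, Nat.cast_eq_zero]
        omega
      apply mul_left_cancel₀ hC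
      have hCn : (C ((n : ℚ)) : MvPolynomial (Fin N) ℚ) = (n : MvPolynomial (Fin N) ℚ) := by
        simp
      -- RHS: C n * sum = sum over sigma of (μ, i)
      have hrhs : (C ((n : ℚ)) : MvPolynomial (Fin N) ℚ) *
            ∑ μ : Nat.Partition n, epsE N n μ.parts =
          ∑ x ∈ (Finset.univ : Finset (Nat.Partition n)).sigma (fun μ => μ.parts.toFinset),
            C ((x.1.parts.count x.2 : ℚ) * x.2) * epsE N n x.1.parts := by
        rw [Finset.mul_sum, Finset.sum_sigma]
        refine Finset.sum_congr rfl fun μ _ => ?_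
        dsimp only
        rw [← Finset.sum_mul, ← map_sum]
        congr 2
        have hms := Finset.sum_multiset_count μ.parts
        rw [μ.parts_sum] at hms
        push_cast [hms]
        simp [mul_comm]
      have hstep : ∀ i ∈ Finset.Icc 1 n,
          C ((-1 : ℚ) ^ (i - 1)) * psum (Fin N) ℚ i * esymm (Fin N) ℚ (n - i) =
          ∑ ν : Nat.Partition (n - i),
            C ((-1 : ℚ) ^ (i - 1)) * psum (Fin N) ℚ i * epsE N n ν.parts := by
        intro i hi
        simp only [Finset.mem_Icc] at hi
        rw [ih (n - i) (by omega), Finset.mul_sum]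
        refine Finset.sum_congr rfl fun ν _ => ?_
        rw [epsE_ext N (n - i) n (by omega) ν.parts
          (fun l hl => le_of_le_of_eq (Multiset.le_sum_of_mem hl) ν.parts_sum)]
      rw [hrhs, hCn, newton' N n hn]
      rw [Finset.sum_congr rfl hstep]
      rw [Finset.sum_sigma' (Finset.Icc 1 n) (fun i => (Finset.univ : Finset (Nat.Partition (n - i))))
        (fun i ν => C ((-1 : ℚ) ^ (i - 1)) * psum (Fin N) ℚ i * epsE N n ν.parts)]
      refine Finset.sum_bij'
        (fun (x : Σ i : ℕ, Nat.Partition (n - i)) hx =>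
          (⟨⟨x.1 ::ₘ x.2.parts, by
              intro j hj
              rcases Multiset.mem_cons.mp hj with h | h
              · subst h
                simp only [Finset.mem_sigma, Finset.mem_Icc] at hx
                omega
              · exact x.2.parts_pos h, by
              simp only [Finset.mem_sigma, Finset.mem_Icc] at hx
              rw [Multiset.sum_cons, x.2.parts_sum]
              omega⟩, x.1⟩ : Σ _ : Nat.Partition n, ℕ))
        (fun (y : Σ _ : Nat.Partition n, ℕ) hy =>
          (⟨y.2, ⟨y.1.parts.erase y.2, by
              intro j hj
              exact y.1.parts_pos (Multiset.mem_of_mem_erase hj), by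
              simp only [Finset.mem_sigma, Multiset.mem_toFinset] at hy
              have hc := congrArg Multiset.sum (Multiset.cons_erase hy.2)
              rw [Multiset.sum_cons, y.1.parts_sum] at hc
              omega⟩⟩ : Σ i : ℕ, Nat.Partition (n - i)))
        ?_ ?_ ?_ ?_ ?_
      · intro x hx
        simp [Finset.mem_sigma, Multiset.mem_toFinset]
      · intro y hy
        simp only [Finset.mem_sigma, Multiset.mem_toFinset, Finset.mem_univ, true_and] at hy
        simp only [Finset.mem_sigma, Finset.mem_Icc, Finset.mem_univ, and_true]
        have h1 := y.1.parts_pos hy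
        have h2 := (Multiset.le_sum_of_mem hy).trans_eq y.1.parts_sum
        omega
      · intro x hx
        obtain ⟨i, ν⟩ := x
        apply Sigma.ext
        · rfl
        · apply heq_of_eq
          apply Nat.Partition.ext
          exact Multiset.erase_cons_head i ν.parts
      · intro y hy
        simp only [Finset.mem_sigma, Multiset.mem_toFinset, Finset.mem_univ, true_and] at hy
        apply Sigma.ext
        · apply Nat.Partition.ext
          exact Multiset.cons_erase hy
        · simp
      · intro x hx
        simp only [Finset.mem_sigma, Finset.mem_univ, and_true] at hx
        have hmem : x.1 ∈ x.1 ::ₘ x.2.parts := Multiset.mem_cons_self _ _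
        have := epsE_step N n x.1 hx (x.1 ::ₘ x.2.parts) hmem
        rw [Multiset.erase_cons_head] at this
        exact this

end Main

end Aux

/-- **MPS paper, Lemma 3.1 (1).** The expansion of the `n`-th elementary symmetric
function in power sums: `e_n = ∑_{m ⊢ n} ∏_{l ≥ 1} (1/m_l!) ((-1)^{l-1}/l)^{m_l} p_l^{m_l}`,
where the sum is over multiplicity vectors `m` with `∑ l·m_l = n`, here encoded as
partitions `μ` of `n` via `m_l = μ.parts.count l`. The identity holds in the ring of
symmetric polynomials in any number `N` of variables over `ℚ`. -/
theorem elementary_in_power_sums (N n : ℕ) (hn : 1 ≤ n) :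
    esymm (Fin N) ℚ n =
      ∑ μ : Nat.Partition n,
        ∏ l ∈ Finset.Icc 1 n,
          C ((1 / (μ.parts.count l).factorial : ℚ) *
              ((-1) ^ (l - 1) / (l : ℚ)) ^ (μ.parts.count l)) *
            (psum (Fin N) ℚ l) ^ (μ.parts.count l) := by
  have := key N n
  simpa [epsE, epsC] using this
end

section
/- For every integer n ≥ 1, the following identity holds in the field ℚ(q) of rational functions in one variable q over ℚ: q^{n(n-1)/2}/((1-q)(1-q^2)···(1-q^n)) = ∑_{m ⊢ n} ∏_{l≥1} (1/m_l!) · ((-1)^{l-1}/(l·(1-q^l)))^{m_l}, where the sum ranges over all multiplicity vectors m with ∑_{l≥1} l·m_l = n. -/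
open Finset

noncomputable section MPS

local notation "q" => (RatFunc.X : RatFunc ℚ)

instance : CharZero (RatFunc ℚ) :=
  charZero_of_injective_algebraMap (algebraMap ℚ (RatFunc ℚ)).injective

lemma q_pow_ne_one {k : ℕ} (hk : 1 ≤ k) : q ^ k ≠ 1 := by
  intro h
  have h2 : algebraMap (Polynomial ℚ) (RatFunc ℚ) (Polynomial.X ^ k) =
      algebraMap (Polynomial ℚ) (RatFunc ℚ) 1 := by
    simpa [map_pow, RatFunc.algebraMap_X] using h
  have h3 := RatFunc.algebraMap_injective ℚ h2
  have := congrArg Polynomial.natDegree h3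
  simp [Polynomial.natDegree_X_pow] at this
  omega

lemma one_sub_q_pow_ne_zero {k : ℕ} (hk : 1 ≤ k) : 1 - q ^ k ≠ 0 := by
  intro h
  exact q_pow_ne_one hk (sub_eq_zero.mp h).symm

/-- Principal specialization of `e_n`. -/
def E : ℕ → RatFunc ℚ
  | 0 => 1
  | n + 1 => q ^ n * E n / (1 - q ^ (n + 1))

lemma E_rec (n : ℕ) : (1 - q ^ (n + 1)) * E (n + 1) = q ^ n * E n := by
  rw [E, mul_div_cancel₀]
  exact one_sub_q_pow_ne_zero (Nat.le_add_left 1 n)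

lemma tri_succ (m : ℕ) : (m + 1) * m / 2 = m + m * (m - 1) / 2 := by
  have h1 : 2 ∣ m * (m - 1) := by
    rcases m with _ | k
    · simp
    · simpa [Nat.succ_sub_one, mul_comm] using (Nat.even_mul_succ_self k).two_dvd
  have h2 : (m + 1) * m = m * (m - 1) + 2 * m := by
    rcases m with _ | k
    · simp
    · simp only [Nat.succ_sub_one]; ring
  omega

lemma E_closed (n : ℕ) :
    E n = q ^ (n * (n - 1) / 2) / ∏ i ∈ Finset.Icc 1 n, (1 - q ^ i) := by
  induction n with
  | zero => simp [E]
  | succ n ih =>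
      rw [E, ih, Finset.prod_Icc_succ_top (by omega),
        show (n + 1) * (n + 1 - 1) / 2 = n + n * (n - 1) / 2 by
          simpa using tri_succ n,
        pow_add]
      rw [pow_add]; field_simp

lemma lemD (m : ℕ) :
    ∑ j ∈ Finset.range (m + 1), (-1 : RatFunc ℚ) ^ j * E j = (-1) ^ m * q ^ m * E m := by
  induction m with
  | zero => simp
  | succ m ih =>
      rw [Finset.sum_range_succ, ih]
      have h := E_rec m
      have hne := one_sub_q_pow_ne_zero (k := m + 1) (by omega)
      have : E (m + 1) = q ^ m * E m / (1 - q ^ (m + 1)) := rfl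
      rw [this]
      field_simp
      ring

lemma lemC (n : ℕ) :
    ∑ k ∈ Finset.Icc 1 (n + 1), (-1 : RatFunc ℚ) ^ (k - 1) * E (n + 1 - k) = q ^ n * E n := by
  rw [show Finset.Icc 1 (n + 1) = Finset.Ico 1 (n + 2) by rw [← Finset.Ico_add_one_right_eq_Icc]; rfl,
    Finset.sum_Ico_eq_sum_range]
  simp only [show n + 2 - 1 = n + 1 from rfl]
  have h1 : ∀ i ∈ Finset.range (n + 1),
      (-1 : RatFunc ℚ) ^ (1 + i - 1) * E (n + 1 - (1 + i)) = (-1) ^ i * E (n - i) := by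
    intro i hi
    rw [show 1 + i - 1 = i by omega, show n + 1 - (1 + i) = n - i by omega]
  rw [Finset.sum_congr rfl h1, ← Finset.sum_range_reflect]
  simp only [Nat.add_sub_cancel]
  have h2 : ∀ j ∈ Finset.range (n + 1),
      (-1 : RatFunc ℚ) ^ (n - j) * E (n - (n - j)) = (-1) ^ n * ((-1) ^ j * E j) := by
    intro j hj
    rw [Finset.mem_range] at hj
    rw [show n - (n - j) = j by omega]
    have : ((-1 : RatFunc ℚ)) ^ (n - j) * (-1) ^ j = (-1) ^ n := by
      rw [← pow_add, show n - j + j = n by omega]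
    calc ((-1 : RatFunc ℚ)) ^ (n - j) * E j
        = ((-1 : RatFunc ℚ)) ^ (n - j) * ((-1) ^ j * (-1) ^ j) * E j := by
          rw [← pow_add, Even.neg_one_pow ⟨j, rfl⟩, mul_one]
      _ = (-1) ^ n * ((-1) ^ j * E j) := by rw [← mul_assoc, this]; ring
  rw [Finset.sum_congr rfl h2, ← Finset.mul_sum, lemD n,
    show ((-1 : RatFunc ℚ)) ^ n * ((-1) ^ n * q ^ n * E n)
      = ((-1 : RatFunc ℚ) ^ (n + n)) * (q ^ n * E n) by rw [pow_add]; ring,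
    Even.neg_one_pow ⟨n, rfl⟩, one_mul]

lemma lemB (n : ℕ) :
    ∑ k ∈ Finset.Icc 1 n, (-1 : RatFunc ℚ) ^ (k - 1) * (1 - q ^ k)⁻¹ * E (n - k)
      = n * E n := by
  induction n with
  | zero => simp
  | succ n ih =>
      have hne := one_sub_q_pow_ne_zero (k := n + 1) (by omega)
      apply mul_left_cancel₀ hne
      rw [show (1 - q ^ (n + 1)) * ((↑(n + 1) : RatFunc ℚ) * E (n + 1))
          = (↑(n + 1) : RatFunc ℚ) * ((1 - q ^ (n + 1)) * E (n + 1)) by ring,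
        E_rec n, Finset.mul_sum, Finset.sum_Icc_succ_top (by omega : 1 ≤ n + 1)]
      have hterm : ∀ k ∈ Finset.Icc 1 n,
          (1 - q ^ (n + 1)) * ((-1 : RatFunc ℚ) ^ (k - 1) * (1 - q ^ k)⁻¹ * E (n + 1 - k))
            = q ^ n * ((-1) ^ (k - 1) * (1 - q ^ k)⁻¹ * E (n - k))
              + (-1) ^ (k - 1) * E (n + 1 - k) := by
        intro k hk
        rw [Finset.mem_Icc] at hk
        obtain ⟨hk1, hk2⟩ := hk
        have hm : n + 1 - k = n - k + 1 := by omega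
        rw [hm]
        have e1 := E_rec (n - k)
        have hq : q ^ n = q ^ k * q ^ (n - k) := by
          rw [← pow_add, show k + (n - k) = n by omega]
        have hq2 : q ^ (n + 1) = q ^ k * (q ^ (n - k) * q) := by
          rw [← pow_succ, ← pow_add, show k + (n - k + 1) = n + 1 by omega]
        have hq3 : q ^ (n - k + 1) = q ^ (n - k) * q := pow_succ q (n - k)
        have hqk := one_sub_q_pow_ne_zero (k := k) hk1
        field_simp
        rw [hq, hq2]
        rw [hq3] at e1
        linear_combination (q ^ k) * e1
      rw [Finset.sum_congr rfl hterm, Finset.sum_add_distrib, ← Finset.mul_sum, ih,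
        show (1 - q ^ (n + 1)) * ((-1 : RatFunc ℚ) ^ (n + 1 - 1) * (1 - q ^ (n + 1))⁻¹
            * E (n + 1 - (n + 1)))
          = (-1 : RatFunc ℚ) ^ (n + 1 - 1) * E (n + 1 - (n + 1)) by
            field_simp,
        add_assoc, ← Finset.sum_Icc_succ_top (by omega : 1 ≤ n + 1)
          (fun k => (-1 : RatFunc ℚ) ^ (k - 1) * E (n + 1 - k)), lemC n]
      push_cast
      ring

/-- The weight of a part of size `l`. -/
def aa (l : ℕ) : RatFunc ℚ := (-1) ^ (l - 1) / ((l : RatFunc ℚ) * (1 - q ^ l))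

/-- The factor coming from a part of size `l` with multiplicity `c`. -/
def term (c l : ℕ) : RatFunc ℚ := (1 / (c.factorial : RatFunc ℚ)) * aa l ^ c

/-- The partition-sum side. -/
def S (n : ℕ) : RatFunc ℚ :=
  ∑ μ : Nat.Partition n, ∏ l ∈ Finset.Icc 1 n, term (μ.parts.count l) l

lemma count_eq_zero_of_gt {m : ℕ} (ν : Nat.Partition m) {l : ℕ} (h : m < l) :
    ν.parts.count l = 0 := by
  rw [Multiset.count_eq_zero]
  intro hl
  obtain ⟨t, ht⟩ := Multiset.exists_cons_of_mem hl
  have hs := ν.parts_sum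
  rw [ht, Multiset.sum_cons] at hs
  omega

lemma prod_term_extend {m n : ℕ} (h : m ≤ n) (ν : Nat.Partition m) :
    ∏ l ∈ Finset.Icc 1 n, term (ν.parts.count l) l
      = ∏ l ∈ Finset.Icc 1 m, term (ν.parts.count l) l := by
  symm
  apply Finset.prod_subset (Finset.Icc_subset_Icc_right h)
  intro l hl hnl
  rw [Finset.mem_Icc] at hl hnl
  rw [count_eq_zero_of_gt ν (by omega)]
  simp [term]

lemma A1 (n : ℕ) (μ : Nat.Partition n) :
    ∑ k ∈ Finset.Icc 1 n, μ.parts.count k * k = n := by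
  have hsub : μ.parts.toFinset ⊆ Finset.Icc 1 n := by
    intro p hp
    rw [Multiset.mem_toFinset] at hp
    rw [Finset.mem_Icc]
    refine ⟨μ.parts_pos hp, ?_⟩
    obtain ⟨t, ht⟩ := Multiset.exists_cons_of_mem hp
    have hs := μ.parts_sum
    rw [ht, Multiset.sum_cons] at hs
    omega
  have h := Finset.sum_multiset_count_of_subset μ.parts _ hsub
  rw [μ.parts_sum] at h
  simpa [smul_eq_mul] using h.symm

/-- Adding a part of size `k`. -/
def insPart {n : ℕ} (k : ℕ) (hk1 : 1 ≤ k) (hk2 : k ≤ n) (ν : Nat.Partition (n - k)) :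
    Nat.Partition n where
  parts := k ::ₘ ν.parts
  parts_pos := by
    intro i hi
    rcases Multiset.mem_cons.mp hi with h | h
    · omega
    · exact ν.parts_pos h
  parts_sum := by rw [Multiset.sum_cons, ν.parts_sum]; omega

/-- Removing a part of size `k`. -/
def delPart {n : ℕ} (k : ℕ) (μ : Nat.Partition n) (hk : k ∈ μ.parts) :
    Nat.Partition (n - k) where
  parts := μ.parts.erase k
  parts_pos := fun hi => μ.parts_pos (Multiset.mem_of_mem_erase hi)
  parts_sum := by
    have h2 : k + (μ.parts.erase k).sum = n := by
      rw [← Multiset.sum_cons, Multiset.cons_erase hk, μ.parts_sum]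
    omega

lemma A3 {n k : ℕ} (hk1 : 1 ≤ k) (hk2 : k ≤ n) :
    ∑ μ : Nat.Partition n,
        (μ.parts.count k : RatFunc ℚ) * ∏ l ∈ Finset.Icc 1 n, term (μ.parts.count l) l
      = aa k * S (n - k) := by
  classical
  rw [S, Finset.sum_congr rfl
    (fun ν _ => (prod_term_extend (by omega : n - k ≤ n) ν).symm), Finset.mul_sum]
  rw [← Finset.sum_filter_of_ne (p := fun μ : Nat.Partition n => k ∈ μ.parts)
    (by
      intro μ _ hf
      by_contra hmem
      rw [Multiset.count_eq_zero.mpr hmem] at hf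
      simp at hf)]
  have hkmem : k ∈ Finset.Icc 1 n := Finset.mem_Icc.mpr ⟨hk1, hk2⟩
  refine Finset.sum_bij' (fun μ hμ => delPart k μ (by simpa using hμ))
    (fun ν _ => insPart k hk1 hk2 ν) (fun μ hμ => Finset.mem_univ _)
    (fun ν _ => by
      simp only [Finset.mem_filter, Finset.mem_univ, true_and, insPart]
      exact Multiset.mem_cons_self k _)
    (fun μ hμ => by
      ext1
      simp only [insPart, delPart]
      exact Multiset.cons_erase (by simpa using hμ))
    (fun ν _ => by
      ext1
      simp only [insPart, delPart]
      exact Multiset.erase_cons_head k _) ?_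
  intro μ hμ
  have hμk : k ∈ μ.parts := by simpa using hμ
  simp only [delPart]
  rw [← Finset.mul_prod_erase _ _ hkmem,
    ← Finset.mul_prod_erase (f := fun l => term ((μ.parts.erase k).count l) l) _ hkmem]
  have hrest : ∀ l ∈ (Finset.Icc 1 n).erase k,
      term ((μ.parts.erase k).count l) l = term (μ.parts.count l) l := by
    intro l hl
    rw [Multiset.count_erase_of_ne (Finset.ne_of_mem_erase hl)]
  rw [Finset.prod_congr rfl hrest, Multiset.count_erase_self]
  obtain ⟨d, hd⟩ : ∃ d, μ.parts.count k = d + 1 :=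
    ⟨μ.parts.count k - 1, by
      have := Multiset.one_le_count_iff_mem.mpr hμk
      omega⟩
  rw [hd]
  have hscal : ((d + 1 : ℕ) : RatFunc ℚ) * term (d + 1) k = aa k * term d k := by
    simp only [term, Nat.factorial_succ, pow_succ]
    have h1 : ((d + 1 : ℕ) : RatFunc ℚ) ≠ 0 := Nat.cast_ne_zero.mpr (Nat.succ_ne_zero d)
    have h2 : ((d.factorial : ℕ) : RatFunc ℚ) ≠ 0 := Nat.cast_ne_zero.mpr d.factorial_ne_zero
    have h3 : ((d + 1 : ℕ) : RatFunc ℚ) * (d.factorial : RatFunc ℚ) ≠ 0 := by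
      exact mul_ne_zero h1 h2
    push_cast at h1 h2 h3 ⊢
    field_simp
  rw [← mul_assoc, ← mul_assoc, hscal, Nat.add_sub_cancel]

lemma lemA (n : ℕ) :
    (n : RatFunc ℚ) * S n
      = ∑ k ∈ Finset.Icc 1 n, (-1 : RatFunc ℚ) ^ (k - 1) * (1 - q ^ k)⁻¹ * S (n - k) := by
  rw [S, Finset.mul_sum]
  have h1 : ∀ μ : Nat.Partition n,
      (n : RatFunc ℚ) * ∏ l ∈ Finset.Icc 1 n, term (μ.parts.count l) l
        = ∑ k ∈ Finset.Icc 1 n, (k : RatFunc ℚ) *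
            ((μ.parts.count k : RatFunc ℚ) *
              ∏ l ∈ Finset.Icc 1 n, term (μ.parts.count l) l) := by
    intro μ
    conv_lhs => rw [show ((n : ℕ) : RatFunc ℚ)
      = ((∑ k ∈ Finset.Icc 1 n, μ.parts.count k * k : ℕ) : RatFunc ℚ) from by rw [A1 n μ]]
    push_cast
    rw [Finset.sum_mul]
    exact Finset.sum_congr rfl fun k _ => by ring
  rw [Finset.sum_congr rfl fun μ _ => h1 μ, Finset.sum_comm]
  refine Finset.sum_congr rfl fun k hk => ?_
  rw [Finset.mem_Icc] at hk
  rw [← Finset.mul_sum, A3 hk.1 hk.2]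
  have hk0 : (k : RatFunc ℚ) ≠ 0 := Nat.cast_ne_zero.mpr (by omega)
  have hqk := one_sub_q_pow_ne_zero hk.1
  rw [aa]
  field_simp

lemma S_eq_E (n : ℕ) : S n = E n := by
  induction n using Nat.strong_induction_on with
  | _ n ih =>
    rcases Nat.eq_zero_or_pos n with h | h
    · subst h
      rw [S, E]
      simp
    · have hn0 : (n : RatFunc ℚ) ≠ 0 := Nat.cast_ne_zero.mpr (by omega)
      apply mul_left_cancel₀ hn0
      rw [lemA n, ← lemB n]
      exact Finset.sum_congr rfl fun k hk => by
        rw [Finset.mem_Icc] at hk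
        rw [ih (n - k) (by omega)]

end MPS

/-- **MPS paper, principal specialization of Lemma 3.1 (1).** In the field `ℚ(q)` of
rational functions, for every `n ≥ 1`:
`q^{n(n-1)/2}/((1-q)(1-q²)⋯(1-qⁿ)) = ∑_{m ⊢ n} ∏_{l ≥ 1} (1/m_l!)((-1)^{l-1}/(l(1-q^l)))^{m_l}`,
where the sum is over multiplicity vectors `m` with `∑ l·m_l = n`, encoded as partitions
`μ` of `n` via `m_l = μ.parts.count l`. -/
theorem principal_specialization_esymm (n : ℕ) (hn : 1 ≤ n) :
    (RatFunc.X : RatFunc ℚ) ^ (n * (n - 1) / 2) /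
        ∏ i ∈ Finset.Icc 1 n, (1 - (RatFunc.X : RatFunc ℚ) ^ i) =
      ∑ μ : Nat.Partition n,
        ∏ l ∈ Finset.Icc 1 n,
          (1 / ((μ.parts.count l).factorial : RatFunc ℚ)) *
            ((-1) ^ (l - 1) /
                ((l : RatFunc ℚ) * (1 - (RatFunc.X : RatFunc ℚ) ^ l))) ^ (μ.parts.count l) := by
  rw [← E_closed n]
  exact (S_eq_E n).symm
end

section
/- For every integer n ≥ 1, the following identity holds in the field ℚ(q) of rational functions in one variable q over ℚ: q^{n(n-1)/2}/((q^n-1)(q^n-q)···(q^n-q^{n-1})) = ∑_{m ⊢ n} ∏_{l≥1} (1/m_l!) · ((-1)^{l-1}/(l·[l]_q))^{m_l} · (q-1)^{-∑_{l≥1} m_l}, where [l]_q = (q^l-1)/(q-1) and the sum ranges over all multiplicity vectors m with ∑_{l≥1} l·m_l = n. -/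
open Finset

set_option maxHeartbeats 1000000
noncomputable section MPS



/-- `qX` is the generator of `ℚ(q)`. -/
def qX : RatFunc ℚ := RatFunc.X

/-- `qP n = ∏_{j=1}^n (q^j - 1)`. -/
def qP (n : ℕ) : RatFunc ℚ := ∏ j ∈ Finset.Icc 1 n, (qX ^ j - 1)

/-- `qa l = (-1)^(l-1) / (l (q^l - 1))`. -/
def qa (l : ℕ) : RatFunc ℚ := (-1) ^ (l - 1) / ((l : RatFunc ℚ) * (qX ^ l - 1))

lemma qX_pow_sub_one_ne {l : ℕ} (hl : 1 ≤ l) : qX ^ l - 1 ≠ 0 := by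
  have h : (Polynomial.X : Polynomial ℚ) ^ l - Polynomial.C 1 ≠ 0 :=
    Polynomial.X_pow_sub_C_ne_zero hl 1
  intro hc
  apply h
  apply RatFunc.algebraMap_injective ℚ
  rw [map_sub, map_pow, RatFunc.algebraMap_X, map_one, map_zero]
  simpa [qX] using hc

lemma qP_ne (n : ℕ) : qP n ≠ 0 := by
  refine Finset.prod_ne_zero_iff.2 fun j hj => qX_pow_sub_one_ne (Finset.mem_Icc.1 hj).1

lemma qP_zero : qP 0 = 1 := by simp [qP]

lemma qP_succ (n : ℕ) : qP (n + 1) = qP n * (qX ^ (n + 1) - 1) := by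
  rw [qP, qP, Finset.prod_Icc_succ_top (Nat.le_add_left 1 n)]



variable (a : ℕ → RatFunc ℚ)

/-- weight of a multiset w.r.t. coefficients `a`, over range `Icc 1 N`. -/
def qw (N : ℕ) (s : Multiset ℕ) : RatFunc ℚ :=
  ∏ l ∈ Finset.Icc 1 N, (1 / ((s.count l).factorial : RatFunc ℚ)) * (a l) ^ (s.count l)

def qF (n : ℕ) : RatFunc ℚ := ∑ μ : Nat.Partition n, qw a n μ.parts

lemma count_eq_zero_of_gt_s6 {n : ℕ} (μ : Nat.Partition n) {l : ℕ} (hl : n < l) :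
    μ.parts.count l = 0 := by
  rw [Multiset.count_eq_zero]
  intro hmem
  have h2 : l ≤ μ.parts.sum := Multiset.single_le_sum (fun x _ => Nat.zero_le x) _ hmem
  rw [μ.parts_sum] at h2
  omega

lemma qw_extend {n N : ℕ} (hN : n ≤ N) (μ : Nat.Partition n) :
    qw a N μ.parts = qw a n μ.parts := by
  rw [qw, qw]
  refine (Finset.prod_subset (Finset.Icc_subset_Icc_right hN) fun l hl hnl => ?_).symm
  have hml : n < l := by
    simp only [Finset.mem_Icc] at hl hnl
    omega
  rw [count_eq_zero_of_gt_s6 μ hml]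
  simp

lemma sum_count_mul {n : ℕ} (μ : Nat.Partition n) :
    ∑ l ∈ Finset.Icc 1 n, l * μ.parts.count l = n := by
  classical
  have h := Multiset.toFinset_sum_count_nsmul_eq μ.parts
  have hsum : (∑ l ∈ μ.parts.toFinset, μ.parts.count l • ({l} : Multiset ℕ)).sum = n := by
    rw [h, μ.parts_sum]
  rw [Multiset.sum_sum] at hsum
  simp only [Multiset.sum_nsmul, Multiset.sum_singleton, smul_eq_mul] at hsum
  have hsub : μ.parts.toFinset ⊆ Finset.Icc 1 n := by
    intro l hl
    rw [Multiset.mem_toFinset] at hl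
    rw [Finset.mem_Icc]
    have h2 : l ≤ μ.parts.sum := Multiset.single_le_sum (fun x _ => Nat.zero_le x) _ hl
    rw [μ.parts_sum] at h2
    exact ⟨μ.parts_pos hl, h2⟩
  have hz : ∀ l ∈ Finset.Icc 1 n, l ∉ μ.parts.toFinset → μ.parts.count l * l = 0 := by
    intro l _ hl
    rw [Multiset.mem_toFinset, ← Multiset.count_eq_zero] at hl
    rw [hl, zero_mul]
  calc ∑ l ∈ Finset.Icc 1 n, l * μ.parts.count l
      = ∑ l ∈ Finset.Icc 1 n, μ.parts.count l * l :=
        Finset.sum_congr rfl fun l _ => mul_comm _ _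
    _ = ∑ l ∈ μ.parts.toFinset, μ.parts.count l * l := (Finset.sum_subset hsub hz).symm
    _ = n := hsum


instance inst_s6 : CharZero (RatFunc ℚ) :=
  charZero_of_injective_algebraMap (algebraMap ℚ (RatFunc ℚ)).injective



lemma qw_erase {N l : ℕ} (hl : l ∈ Finset.Icc 1 N) {s : Multiset ℕ} (hm : l ∈ s) :
    (s.count l : RatFunc ℚ) * qw a N s = a l * qw a N (s.erase l) := by
  classical
  rw [qw, qw, ← Finset.mul_prod_erase _ _ hl, ← Finset.mul_prod_erase _ _ hl]
  have hprod : ∏ j ∈ (Finset.Icc 1 N).erase l,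
      (1 / (((s.erase l).count j).factorial : RatFunc ℚ)) * (a j) ^ ((s.erase l).count j)
      = ∏ j ∈ (Finset.Icc 1 N).erase l,
      (1 / ((s.count j).factorial : RatFunc ℚ)) * (a j) ^ (s.count j) := by
    refine Finset.prod_congr rfl fun j hj => ?_
    rw [Multiset.count_erase_of_ne (Finset.ne_of_mem_erase hj)]
  rw [hprod, Multiset.count_erase_self]
  obtain ⟨d, hd⟩ : ∃ d, s.count l = d + 1 :=
    ⟨s.count l - 1, (Nat.succ_pred_eq_of_pos (Multiset.count_pos.2 hm)).symm⟩
  rw [hd]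
  simp only [Nat.add_sub_cancel]
  have h1 : ((d + 1).factorial : RatFunc ℚ) = ((d : RatFunc ℚ) + 1) * (d.factorial : RatFunc ℚ) := by
    rw [Nat.factorial_succ]; push_cast; ring
  have h2 : ((d.factorial : ℕ) : RatFunc ℚ) ≠ 0 :=
    Nat.cast_ne_zero.2 d.factorial_ne_zero
  have h3 : ((d : RatFunc ℚ) + 1) ≠ 0 := Nat.cast_add_one_ne_zero d
  set P : RatFunc ℚ := ∏ j ∈ (Finset.Icc 1 N).erase l,
      (1 / ((s.count j).factorial : RatFunc ℚ)) * a j ^ (s.count j) with hP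
  have hkey : ((d : RatFunc ℚ) + 1) * (1 / ((d + 1).factorial : RatFunc ℚ))
      = 1 / ((d.factorial : ℕ) : RatFunc ℚ) := by
    rw [h1]; field_simp
  push_cast
  linear_combination (a l ^ (d + 1) * P) * hkey

def erasePart {n : ℕ} (l : ℕ) (μ : Nat.Partition n) (h : l ∈ μ.parts) :
    Nat.Partition (n - l) where
  parts := μ.parts.erase l
  parts_pos := fun hi => μ.parts_pos (Multiset.mem_of_mem_erase hi)
  parts_sum := by
    have hc := Multiset.cons_erase h
    have hs := μ.parts_sum
    have h2 : (l ::ₘ μ.parts.erase l).sum = μ.parts.sum := by rw [hc]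
    rw [Multiset.sum_cons] at h2
    omega

def addPart {n : ℕ} (l : ℕ) (hl : 1 ≤ l) (hln : l ≤ n) (ν : Nat.Partition (n - l)) :
    Nat.Partition n where
  parts := l ::ₘ ν.parts
  parts_pos := fun hi => by
    rcases Multiset.mem_cons.1 hi with h | h
    · subst h; exact hl
    · exact ν.parts_pos h
  parts_sum := by rw [Multiset.sum_cons, ν.parts_sum]; omega


end MPS

noncomputable section MPS2

lemma key_step (a : ℕ → RatFunc ℚ) {n l : ℕ} (hl1 : 1 ≤ l) (hln : l ≤ n) :
    ∑ μ : Nat.Partition n, (μ.parts.count l : RatFunc ℚ) * qw a n μ.parts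
      = a l * qF a (n - l) := by
  classical
  have hstep1 : ∑ μ : Nat.Partition n, (μ.parts.count l : RatFunc ℚ) * qw a n μ.parts
      = ∑ μ ∈ Finset.univ.filter (fun μ : Nat.Partition n => l ∈ μ.parts),
          (μ.parts.count l : RatFunc ℚ) * qw a n μ.parts := by
    refine (Finset.sum_filter_of_ne fun μ _ hne => ?_).symm
    by_contra hmem
    rw [Multiset.count_eq_zero_of_notMem hmem] at hne
    simp at hne
  rw [hstep1, qF, Finset.mul_sum]
  refine Finset.sum_bij'
    (i := fun μ hμ => erasePart l μ (by simpa using (Finset.mem_filter.1 hμ).2))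
    (j := fun ν _ => addPart l hl1 hln ν) (fun μ hμ => Finset.mem_univ _)
    (fun ν hν => ?_) (fun μ hμ => ?_) (fun ν hν => ?_) (fun μ hμ => ?_)
  · refine Finset.mem_filter.2 ⟨Finset.mem_univ _, ?_⟩
    simp [addPart]
  · apply Nat.Partition.ext
    simp only [addPart, erasePart]
    exact Multiset.cons_erase (by simpa using (Finset.mem_filter.1 hμ).2)
  · apply Nat.Partition.ext
    simp only [addPart, erasePart]
    exact Multiset.erase_cons_head _ _
  · have hmem : l ∈ μ.parts := by simpa using (Finset.mem_filter.1 hμ).2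
    rw [qw_erase a (Finset.mem_Icc.2 ⟨hl1, hln⟩) hmem]
    congr 1
    have := qw_extend a (Nat.sub_le n l) (erasePart l μ hmem)
    simpa [erasePart] using this

lemma exp_rec (a : ℕ → RatFunc ℚ) (n : ℕ) :
    (n : RatFunc ℚ) * qF a n
      = ∑ l ∈ Finset.Icc 1 n, (l : RatFunc ℚ) * a l * qF a (n - l) := by
  classical
  have hterm : ∀ μ : Nat.Partition n,
      (n : RatFunc ℚ) * qw a n μ.parts
        = ∑ l ∈ Finset.Icc 1 n,
            (l : RatFunc ℚ) * ((μ.parts.count l : RatFunc ℚ) * qw a n μ.parts) := by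
    intro μ
    have hc := sum_count_mul μ
    calc (n : RatFunc ℚ) * qw a n μ.parts
        = ((∑ l ∈ Finset.Icc 1 n, l * μ.parts.count l : ℕ) : RatFunc ℚ) * qw a n μ.parts := by
          rw [hc]
      _ = (∑ l ∈ Finset.Icc 1 n, (l : RatFunc ℚ) * (μ.parts.count l : RatFunc ℚ))
            * qw a n μ.parts := by push_cast; ring
      _ = _ := by rw [Finset.sum_mul]; exact Finset.sum_congr rfl fun l _ => by ring
  rw [qF, Finset.mul_sum]
  rw [Finset.sum_congr rfl fun μ _ => hterm μ]
  rw [Finset.sum_comm]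
  refine Finset.sum_congr rfl fun l hl => ?_
  obtain ⟨hl1, hln⟩ := Finset.mem_Icc.1 hl
  rw [← Finset.mul_sum, key_step a hl1 hln]
  ring

end MPS2

noncomputable section MPS3

def qS (n : ℕ) : RatFunc ℚ :=
  ∑ l ∈ Finset.Icc 1 n, (-1 : RatFunc ℚ) ^ (l - 1) / ((qX ^ l - 1) * qP (n - l))

lemma B_identity : ∀ n : ℕ, qP n * qS n = n := by
  intro n
  induction n with
  | zero => simp [qS]
  | succ n ih =>
    -- abbreviations
    set B : ℕ → RatFunc ℚ := fun l => qP n / ((qX ^ l - 1) * qP (n - l)) with hB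
    have hPn := qP_ne n
    -- step 1 : distribute and split the top term
    have h1 : qP (n + 1) * qS (n + 1)
        = ∑ l ∈ Finset.Icc 1 (n + 1),
            qP (n + 1) * ((-1 : RatFunc ℚ) ^ (l - 1) / ((qX ^ l - 1) * qP (n + 1 - l))) := by
      rw [qS, Finset.mul_sum]
    have htop : qP (n + 1) * ((-1 : RatFunc ℚ) ^ (n + 1 - 1) / ((qX ^ (n + 1) - 1) * qP (n + 1 - (n + 1))))
        = (-1 : RatFunc ℚ) ^ n * qP n := by
      rw [qP_succ, Nat.sub_self, qP_zero, Nat.add_sub_cancel]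
      have hX := qX_pow_sub_one_ne (l := n + 1) (by omega)
      field_simp
    -- step 2 : per-term Pascal identity for 1 ≤ l ≤ n
    have h2 : ∀ l ∈ Finset.Icc 1 n,
        qP (n + 1) * ((-1 : RatFunc ℚ) ^ (l - 1) / ((qX ^ l - 1) * qP (n + 1 - l)))
          = (-1 : RatFunc ℚ) ^ (l - 1) * (qP n / qP (n + 1 - l))
            + (-1 : RatFunc ℚ) ^ (l - 1) * qX ^ l * B l := by
      intro l hl
      obtain ⟨hl1, hln⟩ := Finset.mem_Icc.1 hl
      have hpow : qX ^ l * qX ^ (n + 1 - l) = qX ^ (n + 1) := by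
        rw [← pow_add]; congr 1; omega
      have hP1 : qP (n + 1) = qP n * (qX ^ l * qX ^ (n + 1 - l) - 1) := by
        rw [qP_succ, hpow]
      have hP2 : qP (n + 1 - l) = qP (n - l) * (qX ^ (n + 1 - l) - 1) := by
        have h2 : n + 1 - l = (n - l) + 1 := by omega
        conv_lhs => rw [h2, qP_succ]
        rw [← h2]
      have hx1 : qX ^ l - 1 ≠ 0 := qX_pow_sub_one_ne hl1
      have hx2 : qX ^ (n + 1 - l) - 1 ≠ 0 := qX_pow_sub_one_ne (by omega)
      have hp2 : qP (n - l) ≠ 0 := qP_ne _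
      rw [hB, hP1, hP2]
      field_simp
      ring
    -- step 3 : the alternating sum of `qP n / qP (n+1-l)` telescopes
    have h3 : (∑ l ∈ Finset.Icc 1 n, (-1 : RatFunc ℚ) ^ (l - 1) * (qP n / qP (n + 1 - l)))
          + (-1 : RatFunc ℚ) ^ n * qP n
        = 1 - ∑ l ∈ Finset.Icc 1 n, (-1 : RatFunc ℚ) ^ (l - 1) * ((qX ^ l - 1) * B l) := by
      have hfull : (∑ l ∈ Finset.Icc 1 n, (-1 : RatFunc ℚ) ^ (l - 1) * (qP n / qP (n + 1 - l)))
            + (-1 : RatFunc ℚ) ^ n * qP n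
          = ∑ l ∈ Finset.Icc 1 (n + 1), (-1 : RatFunc ℚ) ^ (l - 1) * (qP n / qP (n + 1 - l)) := by
        rw [Finset.sum_Icc_succ_top (by omega : 1 ≤ n + 1)]
        congr 1
        rw [Nat.sub_self, qP_zero, Nat.add_sub_cancel]
        simp
      rw [hfull]
      have hIcc : Finset.Icc 1 (n + 1) = Finset.Ico 1 (n + 2) := by
        exact (Finset.Ico_add_one_right_eq_Icc 1 (n + 1)).symm
      rw [hIcc, Finset.sum_Ico_eq_sum_range]
      have hrange : n + 2 - 1 = n + 1 := by omega
      rw [hrange, Finset.sum_range_succ']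
      have hzero : (-1 : RatFunc ℚ) ^ (1 + 0 - 1) * (qP n / qP (n + 1 - (1 + 0))) = 1 := by
        simp [Nat.add_sub_cancel, div_self hPn]
      rw [hzero]
      have hIcc2 : Finset.Icc 1 n = Finset.Ico 1 (n + 1) := by
        rw [Finset.Ico_add_one_right_eq_Icc]
      rw [hIcc2, Finset.sum_Ico_eq_sum_range]
      have hrange2 : n + 1 - 1 = n := by omega
      rw [hrange2]
      have hterm : ∀ i ∈ Finset.range n,
          (-1 : RatFunc ℚ) ^ (1 + (i + 1) - 1) * (qP n / qP (n + 1 - (1 + (i + 1))))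
            = -((-1 : RatFunc ℚ) ^ (1 + i - 1) * ((qX ^ (1 + i) - 1) * B (1 + i))) := by
        intro i hi
        have hi' := Finset.mem_range.1 hi
        have hx : qX ^ (1 + i) - 1 ≠ 0 := qX_pow_sub_one_ne (by omega)
        have hpn : qP (n - (1 + i)) ≠ 0 := qP_ne _
        have hidx : n + 1 - (1 + (i + 1)) = n - (1 + i) := by omega
        have hsgn : (1 + (i + 1) - 1) = (1 + i - 1) + 1 := by omega
        rw [hidx, hsgn, hB, pow_succ]
        field_simp
      rw [Finset.sum_congr rfl hterm, Finset.sum_neg_distrib]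
      ring
    -- assemble
    rw [h1, Finset.sum_Icc_succ_top (by omega : 1 ≤ n + 1), htop,
        Finset.sum_congr rfl h2, Finset.sum_add_distrib]
    rw [add_assoc, add_comm (∑ l ∈ Finset.Icc 1 n, (-1 : RatFunc ℚ) ^ (l - 1) * qX ^ l * B l),
        ← add_assoc, h3]
    have h4 : qP n * qS n = ∑ l ∈ Finset.Icc 1 n, (-1 : RatFunc ℚ) ^ (l - 1) * B l := by
      rw [qS, Finset.mul_sum]
      exact Finset.sum_congr rfl fun l _ => by rw [hB]; ring
    have h5 : (1 - ∑ l ∈ Finset.Icc 1 n, (-1 : RatFunc ℚ) ^ (l - 1) * ((qX ^ l - 1) * B l))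
          + ∑ l ∈ Finset.Icc 1 n, (-1 : RatFunc ℚ) ^ (l - 1) * qX ^ l * B l
        = 1 + ∑ l ∈ Finset.Icc 1 n, (-1 : RatFunc ℚ) ^ (l - 1) * B l := by
      rw [sub_add_eq_add_sub, add_sub_assoc, ← Finset.sum_sub_distrib]
      congr 1
      exact Finset.sum_congr rfl fun l _ => by ring
    rw [h5, ← h4, ih]
    push_cast
    ring

end MPS3

noncomputable section MPS4

lemma qX_def : qX = RatFunc.X := rfl

lemma qF_eq : ∀ n : ℕ, qF qa n = 1 / qP n := by
  intro n
  induction n using Nat.strong_induction_on with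
  | _ n ih =>
    match n with
    | 0 =>
      rw [qP_zero]
      simp [qF, qw]
    | (m + 1) =>
      have hne : (((m + 1 : ℕ)) : RatFunc ℚ) ≠ 0 := Nat.cast_ne_zero.2 (by omega)
      have hrec := exp_rec qa (m + 1)
      have hsum : ∑ l ∈ Finset.Icc 1 (m + 1), (l : RatFunc ℚ) * qa l * qF qa (m + 1 - l)
          = qS (m + 1) := by
        rw [qS]
        refine Finset.sum_congr rfl fun l hl => ?_
        obtain ⟨hl1, hln⟩ := Finset.mem_Icc.1 hl
        rw [ih (m + 1 - l) (by omega), qa]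
        have hx := qX_pow_sub_one_ne hl1
        have hl0 : ((l : ℕ) : RatFunc ℚ) ≠ 0 := Nat.cast_ne_zero.2 (by omega)
        have hp := qP_ne (m + 1 - l)
        field_simp
      rw [hsum] at hrec
      have hq := B_identity (m + 1)
      have h' : qS (m + 1) = (((m + 1 : ℕ)) : RatFunc ℚ) * (1 / qP (m + 1)) := by
        rw [mul_one_div, eq_div_iff (qP_ne _), mul_comm]
        exact hq
      rw [h'] at hrec
      exact mul_left_cancel₀ hne hrec

lemma lhs_eq (n : ℕ) :
    (RatFunc.X : RatFunc ℚ) ^ (n * (n - 1) / 2) /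
        ∏ i ∈ Finset.range n,
          ((RatFunc.X : RatFunc ℚ) ^ n - (RatFunc.X : RatFunc ℚ) ^ i) = 1 / qP n := by
  have hXne : (RatFunc.X : RatFunc ℚ) ≠ 0 := RatFunc.X_ne_zero
  have h1 : ∀ i ∈ Finset.range n,
      (RatFunc.X : RatFunc ℚ) ^ n - (RatFunc.X : RatFunc ℚ) ^ i
        = (RatFunc.X : RatFunc ℚ) ^ i * ((RatFunc.X : RatFunc ℚ) ^ (n - i) - 1) := by
    intro i hi
    have hi' := Finset.mem_range.1 hi
    rw [mul_sub, mul_one, ← pow_add]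
    congr 2
    omega
  rw [Finset.prod_congr rfl h1, Finset.prod_mul_distrib]
  have h2 : ∏ i ∈ Finset.range n, (RatFunc.X : RatFunc ℚ) ^ i
      = (RatFunc.X : RatFunc ℚ) ^ (n * (n - 1) / 2) := by
    rw [Finset.prod_pow_eq_pow_sum, Finset.sum_range_id]
  have h3 : ∏ i ∈ Finset.range n, ((RatFunc.X : RatFunc ℚ) ^ (n - i) - 1) = qP n := by
    rw [qP, show Finset.Icc 1 n = Finset.Ico 1 (n + 1) from (Finset.Ico_add_one_right_eq_Icc 1 n).symm,
      Finset.prod_Ico_eq_prod_range]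
    have hr : n + 1 - 1 = n := by omega
    rw [hr]
    rw [← Finset.prod_range_reflect (fun i => (qX ^ (1 + i) - 1)) n]
    refine Finset.prod_congr rfl fun i hi => ?_
    have hi' := Finset.mem_range.1 hi
    rw [qX_def]
    congr 2
    omega
  rw [h2, h3, div_mul_eq_div_div,
    div_self (pow_ne_zero _ hXne), one_div]

end MPS4



/-- **MPS paper, Lemma 3.3.** In the field `ℚ(q)` of rational functions, for every
`n ≥ 1`:
`q^{n(n-1)/2}/((qⁿ-1)(qⁿ-q)⋯(qⁿ-q^{n-1}))
   = ∑_{m ⊢ n} ∏_{l ≥ 1} (1/m_l!)((-1)^{l-1}/(l·[l]_q))^{m_l} · (q-1)^{-∑_l m_l}`,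
where `[l]_q = (q^l-1)/(q-1)` and the sum is over multiplicity vectors `m` with
`∑ l·m_l = n`, encoded as partitions `μ` of `n` via `m_l = μ.parts.count l`. -/
theorem motivic_specialization (n : ℕ) (hn : 1 ≤ n) :
    (RatFunc.X : RatFunc ℚ) ^ (n * (n - 1) / 2) /
        ∏ i ∈ Finset.range n,
          ((RatFunc.X : RatFunc ℚ) ^ n - (RatFunc.X : RatFunc ℚ) ^ i) =
      ∑ μ : Nat.Partition n,
        (∏ l ∈ Finset.Icc 1 n,
            (1 / ((μ.parts.count l).factorial : RatFunc ℚ)) *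
              ((-1) ^ (l - 1) /
                  ((l : RatFunc ℚ) *
                    (((RatFunc.X : RatFunc ℚ) ^ l - 1) /
                      ((RatFunc.X : RatFunc ℚ) - 1)))) ^ (μ.parts.count l)) *
          ((RatFunc.X : RatFunc ℚ) - 1) ^ (-(∑ l ∈ Finset.Icc 1 n, (μ.parts.count l : ℤ))) := by
  rw [lhs_eq n, ← qF_eq n, qF]
  refine Finset.sum_congr rfl fun μ _ => ?_
  have hX1 : (RatFunc.X : RatFunc ℚ) - 1 ≠ 0 := by
    have := qX_pow_sub_one_ne (l := 1) le_rfl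
    rwa [qX_def, pow_one] at this
  have hz : ((RatFunc.X : RatFunc ℚ) - 1) ^ (-(∑ l ∈ Finset.Icc 1 n, (μ.parts.count l : ℤ)))
      = ∏ l ∈ Finset.Icc 1 n, (((RatFunc.X : RatFunc ℚ) - 1)⁻¹) ^ (μ.parts.count l) := by
    have hcast : (∑ l ∈ Finset.Icc 1 n, (μ.parts.count l : ℤ))
        = ((∑ l ∈ Finset.Icc 1 n, μ.parts.count l : ℕ) : ℤ) := by push_cast; rfl
    rw [hcast, zpow_neg, zpow_natCast, ← Finset.prod_pow_eq_pow_sum, ← Finset.prod_inv_distrib]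
    exact Finset.prod_congr rfl fun l _ => (inv_pow _ _).symm
  rw [hz, ← Finset.prod_mul_distrib, qw]
  refine Finset.prod_congr rfl fun l hl => ?_
  obtain ⟨hl1, hln⟩ := Finset.mem_Icc.1 hl
  rw [mul_assoc, ← mul_pow]
  congr 2
  have hx : (RatFunc.X : RatFunc ℚ) ^ l - 1 ≠ 0 := by
    have := qX_pow_sub_one_ne hl1
    rwa [qX_def] at this
  have hl0 : ((l : ℕ) : RatFunc ℚ) ≠ 0 := Nat.cast_ne_zero.2 (by omega)
  simp only [qa, qX_def]
  field_simp
end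

section
/- Let (d_i, e_i)_{i=1,...,n} be a w-admissible decomposition of (d, e). Then for every nonempty subset I ⊊ {1,...,n} with I ≠ {1,...,n}, one has (w + ∑_{i∈I} e_i) · (∑_{i=1}^n d_i) > (w + ∑_{i=1}^n e_i) · (∑_{i∈I} d_i); equivalently, (w + ∑_{i∈I} e_i)/(∑_{i∈I} d_i) > (w + ∑_{i=1}^n e_i)/(∑_{i=1}^n d_i). -/
open Finset

/-- Transitive slope monotonicity. -/
lemma slope_trans (n : ℕ) (d e : ℕ → ℕ) (hd : ∀ i < n, 0 < d i)
    (hmono : ∀ i, i + 1 < n → e i * d (i + 1) ≤ e (i + 1) * d i) :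
    ∀ j, j < n → ∀ i, i ≤ j → e i * d j ≤ e j * d i := by
  intro j
  induction j with
  | zero => intro _ i hi; interval_cases i; exact le_rfl
  | succ m ih =>
    intro hj i hi
    rcases Nat.eq_or_lt_of_le hi with h | h
    · subst h; exact le_rfl
    · have hi' : i ≤ m := Nat.lt_succ_iff.mp h
      have h1 := ih (by omega) i hi'
      have h2 := hmono m hj
      have hdm : 0 < d m := hd m (by omega)
      have : e i * d (m+1) * d m ≤ e (m+1) * d i * d m := by nlinarith
      exact Nat.le_of_mul_le_mul_right this hdm

lemma admissible_aux (w : ℕ) (d e : ℕ → ℕ) :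
    ∀ n : ℕ, (∀ i < n, 0 < d i) →
    (∀ i, i + 1 < n → e i * d (i + 1) ≤ e (i + 1) * d i) →
    (∀ k, 1 ≤ k → k < n →
      e k * ∑ i ∈ Finset.range k, d i < (w + ∑ i ∈ Finset.range k, e i) * d k) →
    ∀ I : Finset ℕ, I ⊆ Finset.range n → I.Nonempty → I ≠ Finset.range n →
    (w + ∑ i ∈ Finset.range n, e i) * ∑ i ∈ I, d i <
      (w + ∑ i ∈ I, e i) * ∑ i ∈ Finset.range n, d i := by
  intro n
  induction n with
  | zero =>
    intro _ _ _ I hI hne _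
    simp only [Finset.range_zero, Finset.subset_empty] at hI
    subst hI
    exact absurd hne (by simp)
  | succ n ih =>
    intro hd hmono hadm I hI hne hproper
    rcases Nat.eq_zero_or_pos n with rfl | hn1
    · -- n = 0 : no proper nonempty subset of {0}
      rcases Finset.subset_singleton_iff.mp (by simpa using hI) with h | h
      · exact absurd h (Finset.nonempty_iff_ne_empty.mp hne)
      · exact absurd (by simpa [Finset.range_one] using h) hproper
    -- n ≥ 1
    have hw : 0 < w := by
      have h1 := hadm 1 le_rfl (by omega)
      have h2 := hmono 0 (by omega)
      simp only [Finset.sum_range_one] at h1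
      nlinarith
    have hDn : 0 < ∑ i ∈ Finset.range n, d i :=
      Finset.sum_pos (fun i hi => hd i (by have := Finset.mem_range.mp hi; omega))
        (by simp; omega)
    have key : (w + ∑ i ∈ Finset.range (n+1), e i) * ∑ i ∈ Finset.range n, d i <
        (w + ∑ i ∈ Finset.range n, e i) * ∑ i ∈ Finset.range (n+1), d i := by
      rw [Finset.sum_range_succ, Finset.sum_range_succ]
      nlinarith [hadm n hn1 (Nat.lt_succ_self n)]
    have hslope := slope_trans (n+1) d e hd hmono
    by_cases hnI : n ∈ I
    · -- Case B : peel off n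
      set J := I.erase n with hJdef
      have hJ : J ⊆ Finset.range n := by
        intro x hx
        have hx1 := Finset.mem_range.mp (hI (Finset.mem_of_mem_erase hx))
        have hx2 := Finset.ne_of_mem_erase hx
        exact Finset.mem_range.mpr (by omega)
      have hIins : I = insert n J := (Finset.insert_erase hnI).symm
      have hsd : ∑ i ∈ I, d i = ∑ i ∈ J, d i + d n := by
        rw [hIins, Finset.sum_insert (Finset.notMem_erase n I)]; ring
      have hse : ∑ i ∈ I, e i = ∑ i ∈ J, e i + e n := by
        rw [hIins, Finset.sum_insert (Finset.notMem_erase n I)]; ring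
      -- split range n sums over J and its complement
      have hsplit_d : ∑ i ∈ Finset.range n \ J, d i + ∑ i ∈ J, d i
          = ∑ i ∈ Finset.range n, d i := Finset.sum_sdiff hJ
      have hsplit_e : ∑ i ∈ Finset.range n \ J, e i + ∑ i ∈ J, e i
          = ∑ i ∈ Finset.range n, e i := Finset.sum_sdiff hJ
      have hcomp : (∑ i ∈ Finset.range n \ J, e i) * d n
          ≤ e n * ∑ i ∈ Finset.range n \ J, d i := by
        rw [Finset.sum_mul, Finset.mul_sum]
        refine Finset.sum_le_sum fun i hi => ?_
        have : i < n := Finset.mem_range.mp (Finset.mem_sdiff.mp hi).1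
        exact hslope n (Nat.lt_succ_self n) i (by omega)
      have star : (w + ∑ i ∈ Finset.range n, e i) * ∑ i ∈ J, d i <
          (w + ∑ i ∈ J, e i) * ∑ i ∈ Finset.range n, d i := by
        rcases Finset.eq_empty_or_nonempty J with hJe | hJne
        · simpa [hJe] using Nat.mul_pos hw hDn
        · have hJprop : J ≠ Finset.range n := by
            intro h
            apply hproper
            rw [hIins, h, Finset.range_add_one]
          exact ih (fun i hi => hd i (by omega)) (fun i hi => hmono i (by omega))
            (fun k hk1 hk2 => hadm k hk1 (by omega)) J hJ hJne hJprop
      rw [hsd, hse, Finset.sum_range_succ, Finset.sum_range_succ]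
      nlinarith [star, hcomp, hsplit_d, hsplit_e]
    · -- Case A : I ⊆ range n
      have hI' : I ⊆ Finset.range n := by
        intro x hx
        have := Finset.mem_range.mp (hI hx)
        have : x ≠ n := fun h => hnI (h ▸ hx)
        exact Finset.mem_range.mpr (by omega)
      by_cases hIeq : I = Finset.range n
      · rw [hIeq]; exact key
      · have h1 := ih (fun i hi => hd i (by omega)) (fun i hi => hmono i (by omega))
          (fun k hk1 hk2 => hadm k hk1 (by omega)) I hI' hne hIeq
        have hDI : 0 < ∑ i ∈ I, d i :=
          Finset.sum_pos (fun i hi => hd i (by have := Finset.mem_range.mp (hI hi); omega)) hne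
        have hDn1 : 0 < ∑ i ∈ Finset.range (n+1), d i :=
          Finset.sum_pos (fun i hi => hd i (Finset.mem_range.mp hi)) (by simp)
        have hmul : ((w + ∑ i ∈ Finset.range (n+1), e i) * ∑ i ∈ I, d i) * ∑ i ∈ Finset.range n, d i <
            ((w + ∑ i ∈ I, e i) * ∑ i ∈ Finset.range (n+1), d i) * ∑ i ∈ Finset.range n, d i := by
          nlinarith [mul_lt_mul_of_pos_right key hDI, mul_lt_mul_of_pos_right h1 hDn1]
        exact lt_of_mul_lt_mul_right hmul (Nat.zero_le _)


/-- **MPS paper, Lemma 6.3 (2).** Let `(d_i, e_i)_{i=1,…,n}` (here indexed by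
`i = 0,…,n-1`) be a `w`-admissible decomposition: all `d_i > 0`, the slopes `e_i/d_i`
weakly increase, and `(w + ∑_{i=1}^k e_i)/(∑_{i=1}^k d_i) > e_{k+1}/d_{k+1}` for
`k = 1,…,n-1`. Then for every nonempty proper subset `I ⊊ {1,…,n}` one has
`(w + ∑_{i∈I} e_i)/(∑_{i∈I} d_i) > (w + ∑_{i=1}^n e_i)/(∑_{i=1}^n d_i)`, i.e., in
cross-multiplied form,
`(w + ∑_{i∈I} e_i)·(∑_{i=1}^n d_i) > (w + ∑_{i=1}^n e_i)·(∑_{i∈I} d_i)`. -/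
theorem admissible_subset_slope (n : ℕ) (hn : 1 ≤ n) (w : ℕ) (d e : ℕ → ℕ)
    (hd : ∀ i < n, 0 < d i)
    (hmono : ∀ i, i + 1 < n → e i * d (i + 1) ≤ e (i + 1) * d i)
    (hadm : ∀ k, 1 ≤ k → k < n →
      e k * ∑ i ∈ Finset.range k, d i < (w + ∑ i ∈ Finset.range k, e i) * d k)
    (I : Finset ℕ) (hI : I ⊆ Finset.range n) (hIne : I.Nonempty)
    (hIproper : I ≠ Finset.range n) :
    (w + ∑ i ∈ Finset.range n, e i) * ∑ i ∈ I, d i <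
      (w + ∑ i ∈ I, e i) * ∑ i ∈ Finset.range n, d i := admissible_aux w d e n hd hmono hadm I hI hIne hIproper
end

section
/- Let w ≥ 1 and let (d_i, e_i)_{i=1,...,n} be a w-admissible decomposition of (d, e). Let t_1,...,t_n and s_1,...,s_n be rational numbers such that 0 ≤ t_i ≤ d_i and d_i · s_i ≥ e_i · t_i for all i, and such that t_j < d_j for at least one index j. Then (w + ∑_{i=1}^n s_i) · (∑_{i=1}^n d_i) > (w + ∑_{i=1}^n e_i) · (∑_{i=1}^n t_i); equivalently, w + ∑_{i=1}^n s_i > ((w + ∑_{i=1}^n e_i)/(∑_{i=1}^n d_i)) · ∑_{i=1}^n t_i. (This is the key inequality establishing the stability of the quiver data glued from semistable data of dimension types (d_i, e_i) along a new sink of level w.) -/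
open Finset

/-- **MPS paper, key inequality in the proof of Theorem 6.4 (stability of glued quiver
data).** Let `w ≥ 1` and let `(d_i, e_i)_{i=1,…,n}` (here indexed by `i = 0,…,n-1`) be a
`w`-admissible decomposition: all `d_i > 0`, the slopes `e_i/d_i` weakly increase, and
`(w + ∑_{i=1}^k e_i)/(∑_{i=1}^k d_i) > e_{k+1}/d_{k+1}` for `k = 1,…,n-1`. Let
`t_1,…,t_n` and `s_1,…,s_n` be rational numbers with `0 ≤ t_i ≤ d_i` and
`d_i·s_i ≥ e_i·t_i` for all `i`, and `t_j < d_j` for at least one `j`. Then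
`(w + ∑_i s_i)·(∑_i d_i) > (w + ∑_i e_i)·(∑_i t_i)`. -/
theorem glued_data_stability (n : ℕ) (hn : 1 ≤ n) (w : ℕ) (hw : 1 ≤ w) (d e : ℕ → ℕ)
    (hd : ∀ i < n, 0 < d i)
    (hmono : ∀ i, i + 1 < n → e i * d (i + 1) ≤ e (i + 1) * d i)
    (hadm : ∀ k, 1 ≤ k → k < n →
      e k * ∑ i ∈ Finset.range k, d i < (w + ∑ i ∈ Finset.range k, e i) * d k)
    (t s : ℕ → ℚ)
    (ht0 : ∀ i < n, 0 ≤ t i) (htd : ∀ i < n, t i ≤ (d i : ℚ))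
    (hs : ∀ i < n, (e i : ℚ) * t i ≤ (d i : ℚ) * s i)
    (hstrict : ∃ j < n, t j < (d j : ℚ)) :
    ((w : ℚ) + ∑ i ∈ Finset.range n, (e i : ℚ)) * ∑ i ∈ Finset.range n, t i <
      ((w : ℚ) + ∑ i ∈ Finset.range n, s i) * ∑ i ∈ Finset.range n, (d i : ℚ) := by
  set D : ℚ := ∑ i ∈ Finset.range n, (d i : ℚ) with hD_def
  set E : ℚ := (w : ℚ) + ∑ i ∈ Finset.range n, (e i : ℚ) with hE_def
  have hdQ : ∀ i < n, (0 : ℚ) < (d i : ℚ) := fun i hi => by exact_mod_cast hd i hi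
  have hDpos : 0 < D := by
    rw [hD_def]
    apply Finset.sum_pos
    · intro i hi; exact hdQ i (Finset.mem_range.mp hi)
    · exact ⟨0, Finset.mem_range.mpr hn⟩
  -- slope monotonicity along a chain
  have hchain : ∀ j, j < n → ∀ i, i ≤ j → (e i : ℚ) * d j ≤ (e j : ℚ) * d i := by
    intro j
    induction j with
    | zero =>
      intro _ i hi
      interval_cases i
      exact le_rfl
    | succ j ih =>
      intro hjn i hij
      rcases Nat.lt_or_ge i (j + 1) with h | h
      · have h1 : (e i : ℚ) * d j ≤ (e j : ℚ) * d i :=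
          ih (Nat.lt_of_succ_lt hjn) i (Nat.lt_succ_iff.mp h)
        have h2 : (e j : ℚ) * d (j + 1) ≤ (e (j + 1) : ℚ) * d j := by
          exact_mod_cast hmono j hjn
        have hdj : (0 : ℚ) < d j := hdQ j (Nat.lt_of_succ_lt hjn)
        have hdj1 : (0 : ℚ) ≤ d (j + 1) := (hdQ (j + 1) hjn).le
        have hdi : (0 : ℚ) ≤ d i := (hdQ i (Nat.lt_of_lt_of_le h hjn.le)).le
        nlinarith [h1, h2, hdj, hdj1, hdi]
      · have : i = j + 1 := le_antisymm hij h
        subst this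
        exact le_rfl
  -- the key fact: each slope is strictly below the total slope
  have key : ∀ i < n, (e i : ℚ) * D < E * (d i : ℚ) := by
    have hm : ∀ i < n, i ≤ n - 1 := fun i hi => Nat.le_sub_one_of_lt hi
    have keym : (e (n - 1) : ℚ) * D < E * (d (n - 1) : ℚ) := by
      rcases Nat.eq_or_lt_of_le hn with h1 | h1
      · -- n = 1
        have hn1 : n = 1 := h1.symm
        subst hn1
        have hd0 := hdQ 0 Nat.one_pos
        have hw' : (1 : ℚ) ≤ w := by exact_mod_cast hw
        simp only [hD_def, hE_def, Finset.sum_range_one]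
        nlinarith
      · -- n ≥ 2, use admissibility at k = n - 1
        have hk1 : 1 ≤ n - 1 := Nat.le_sub_one_of_lt h1
        have hkn : n - 1 < n := Nat.sub_lt (Nat.lt_of_lt_of_le Nat.zero_lt_one hn) Nat.one_pos
        have ha := hadm (n - 1) hk1 hkn
        have haQ : (e (n - 1) : ℚ) * ∑ i ∈ Finset.range (n - 1), (d i : ℚ) <
            ((w : ℚ) + ∑ i ∈ Finset.range (n - 1), (e i : ℚ)) * (d (n - 1) : ℚ) := by
          push_cast
          exact_mod_cast ha
        have hsplitd : D = (∑ i ∈ Finset.range (n - 1), (d i : ℚ)) + (d (n - 1) : ℚ) := by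
          rw [hD_def, ← Finset.sum_range_succ, Nat.sub_add_cancel hn]
        have hsplite : E = ((w : ℚ) + ∑ i ∈ Finset.range (n - 1), (e i : ℚ)) + (e (n - 1) : ℚ) := by
          rw [hE_def, add_assoc, ← Finset.sum_range_succ, Nat.sub_add_cancel hn]
        rw [hsplitd, hsplite]
        nlinarith [haQ]
    intro i hi
    have hc := hchain (n - 1) (Nat.sub_lt (Nat.lt_of_lt_of_le Nat.zero_lt_one hn) Nat.one_pos) i (hm i hi)
    have hdm : (0 : ℚ) < d (n - 1) :=
      hdQ (n - 1) (Nat.sub_lt (Nat.lt_of_lt_of_le Nat.zero_lt_one hn) Nat.one_pos)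
    have hdi : (0 : ℚ) < d i := hdQ i hi
    nlinarith [keym, hc, hDpos, hdm, hdi]
  -- coefficients
  set c : ℕ → ℚ := fun i => E - (e i : ℚ) * D / (d i : ℚ) with hc_def
  have hcpos : ∀ i < n, 0 < c i := by
    intro i hi
    have hdi := hdQ i hi
    have hk := key i hi
    simp only [hc_def]
    rw [sub_pos, div_lt_iff₀ hdi]
    linarith
  -- sum of d i * c i equals w * D
  have hB : ∑ i ∈ Finset.range n, (d i : ℚ) * c i = (w : ℚ) * D := by
    have hterm : ∀ i ∈ Finset.range n,
        (d i : ℚ) * c i = (d i : ℚ) * E - (e i : ℚ) * D := by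
      intro i hi
      have hdi := (hdQ i (Finset.mem_range.mp hi)).ne'
      simp only [hc_def]
      field_simp
    rw [Finset.sum_congr rfl hterm, Finset.sum_sub_distrib, ← Finset.sum_mul, ← Finset.sum_mul]
    have he : ∑ i ∈ Finset.range n, (e i : ℚ) = E - w := by rw [hE_def]; ring
    rw [he, ← hD_def]
    ring
  -- strict comparison of sums
  have hC : ∑ i ∈ Finset.range n, t i * c i < ∑ i ∈ Finset.range n, (d i : ℚ) * c i := by
    obtain ⟨j, hj, hjt⟩ := hstrict
    apply Finset.sum_lt_sum
    · intro i hi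
      have hi' := Finset.mem_range.mp hi
      exact mul_le_mul_of_nonneg_right (htd i hi') (hcpos i hi').le
    · exact ⟨j, Finset.mem_range.mpr hj,
        mul_lt_mul_of_pos_right hjt (hcpos j hj)⟩
  -- bound the s-sum from below
  have h2 : ∑ i ∈ Finset.range n, t i * ((e i : ℚ) * D / (d i : ℚ)) ≤
      ∑ i ∈ Finset.range n, s i * D := by
    apply Finset.sum_le_sum
    intro i hi
    have hi' := Finset.mem_range.mp hi
    have hdi := hdQ i hi'
    have hsi := hs i hi'
    have h3 : t i * ((e i : ℚ) * D / (d i : ℚ)) = ((e i : ℚ) * t i) * (D / (d i : ℚ)) := by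
      ring
    have h4 : s i * D = ((d i : ℚ) * s i) * (D / (d i : ℚ)) := by
      field_simp
    rw [h3, h4]
    exact mul_le_mul_of_nonneg_right hsi (div_nonneg hDpos.le hdi.le)
  -- expand E * ∑ t
  have expand : E * ∑ i ∈ Finset.range n, t i =
      (∑ i ∈ Finset.range n, t i * c i) +
        ∑ i ∈ Finset.range n, t i * ((e i : ℚ) * D / (d i : ℚ)) := by
    rw [Finset.mul_sum, ← Finset.sum_add_distrib]
    apply Finset.sum_congr rfl
    intro i _
    simp only [hc_def]
    ring
  have hsD : (∑ i ∈ Finset.range n, s i) * D = ∑ i ∈ Finset.range n, s i * D := by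
    rw [Finset.sum_mul]
  calc E * ∑ i ∈ Finset.range n, t i
      = (∑ i ∈ Finset.range n, t i * c i) +
        ∑ i ∈ Finset.range n, t i * ((e i : ℚ) * D / (d i : ℚ)) := expand
    _ < (w : ℚ) * D + ∑ i ∈ Finset.range n, s i * D := by
        rw [← hB]
        exact add_lt_add_of_lt_of_le hC h2
    _ = ((w : ℚ) + ∑ i ∈ Finset.range n, s i) * D := by rw [hsD.symm]; ring
end
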